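/- Let v₀, q₀ ∈ ℝ be such that q₀ lies in the subdifferential of L_r at v₀, i.e., L_r(v) ≥ L_r(v₀) + q₀(v − v₀) for all v ∈ ℝ. Then: (i) if L_r(v₀) < 0, then H_r(q₀) < 2; and (ii) if moreover D > 2 and L_r(v₀) ≤ 0, then H_r(q₀) < 2. -/

import Mathlib

open Real Filter Set

noncomputable section

/-- The field Lagrangian `L_f(v₁,v₂) = (v₁² + v₂²)/4 − 1`. -/
def Lf (v₁ v₂ : ℝ) : ℝ := (v₁ ^ 2 + v₂ ^ 2) / 4 - 1

/-- The effective road Hamiltonian `H_r(q) = q² + (p_q)² + 1` built from the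
critical-slope function `pq`. -/
def Hr (pq : ℝ → ℝ) (q : ℝ) : ℝ := q ^ 2 + pq q ^ 2 + 1

/-- The road Lagrangian: the Legendre transform of `Hr`. -/
def Lr (pq : ℝ → ℝ) (v : ℝ) : ℝ := ⨆ q : ℝ, (v * q - Hr pq q)

/-- `pq` assigns to each `q` the critical slope `p_q`: it equals `0` when
`(D−1)q² ≤ 1`, and otherwise it is the unique positive root of
`(D−1)q² = p² + 1 + μp/(κν + p)`. -/
def IsCriticalSlope (D μ ν κ : ℝ) (pq : ℝ → ℝ) : Prop :=
  ∀ q : ℝ,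
    ((D - 1) * q ^ 2 ≤ 1 → pq q = 0) ∧
    (1 < (D - 1) * q ^ 2 →
      0 < pq q ∧ (D - 1) * q ^ 2 = pq q ^ 2 + 1 + μ * pq q / (κ * ν + pq q))

/-- The set of candidate costs in the control problem at a point `(x,y)` with
`x ≥ 0`, `y ≥ 0`: the pure-field cost, the broken road-then-field costs, and
(when `y = 0`) the pure-road cost. -/
def Jset (pq : ℝ → ℝ) (x y : ℝ) : Set ℝ :=
  {Lf x y} ∪
    {c | ∃ τ z : ℝ, 0 < τ ∧ τ < 1 ∧ 0 ≤ z ∧ z ≤ x ∧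
      c = (1 - τ) * Lf ((x - z) / (1 - τ)) (y / (1 - τ)) + τ * Lr pq (z / τ)} ∪
    (if y = 0 then {Lr pq x} else ∅)

/-- The value function `J(x,y)`, extended evenly in `x`. -/
def J (pq : ℝ → ℝ) (x y : ℝ) : ℝ := sInf (Jset pq |x| y)
/-- The field Hamiltonian `H_f(q,p) = q² + p² + 1`. -/
def Hf (q p : ℝ) : ℝ := q ^ 2 + p ^ 2 + 1

/-- The road boundary Hamiltonian `F₀(q,p) = Dq² − μp/(κν + p)`. -/
def F0 (D μ ν κ q p : ℝ) : ℝ := D * q ^ 2 - μ * p / (κ * ν + p)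

/-- The spreading speed along the road, `inf_{q>0} H_r(q)/q`. -/
def roadSpeed (pq : ℝ → ℝ) : ℝ := sInf ((fun q => Hr pq q / q) '' Set.Ioi (0 : ℝ))

/-- The directional spreading speed in direction `ϑ` (measured from the
positive `y`-axis). -/
def cstar (pq : ℝ → ℝ) (ϑ : ℝ) : ℝ :=
  sSup {r : ℝ | 0 ≤ r ∧ J pq (r * Real.sin ϑ) (r * Real.cos ϑ) ≤ 0}

/-- Reflection across the line through the origin in direction `(cos a, sin a)`. -/
def Psi (a : ℝ) (p : ℝ × ℝ) : ℝ × ℝ :=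
  (p.1 * Real.cos (2 * a) + p.2 * Real.sin (2 * a),
   p.1 * Real.sin (2 * a) - p.2 * Real.cos (2 * a))

/-- The closed cone of opening angle `2a` between the positive `x`-axis and the
ray at angle `π/2 − 2a` from the positive `y`-axis. -/
def coneA (a : ℝ) : Set (ℝ × ℝ) :=
  {p | ∃ r ϑ : ℝ, 0 ≤ r ∧ π / 2 - 2 * a ≤ ϑ ∧ ϑ ≤ π / 2 ∧
    p = (r * Real.sin ϑ, r * Real.cos ϑ)}

open Topology

lemma hmono {μ c r s : ℝ} (hμ : 0 < μ) (hc : 0 < c) (hr : 0 ≤ s) (hrs : s ≤ r) :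
    μ * s / (c + s) ≤ μ * r / (c + r) := by
  rw [div_le_div_iff₀ (by linarith) (by linarith)]
  nlinarith [mul_pos hμ hc]

lemma hconc {μ c r1 r2 θ : ℝ} (hμ : 0 < μ) (hc : 0 < c) (h1 : 0 ≤ r1) (h2 : 0 ≤ r2)
    (hθ : 0 ≤ θ) (hθ1 : θ ≤ 1) :
    θ * (μ * r1 / (c + r1)) + (1 - θ) * (μ * r2 / (c + r2))
      ≤ μ * (θ * r1 + (1 - θ) * r2) / (c + (θ * r1 + (1 - θ) * r2)) := by
  have d1 : (0:ℝ) < c + r1 := by linarith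
  have d2 : (0:ℝ) < c + r2 := by linarith
  have ds : (0:ℝ) < c + (θ * r1 + (1 - θ) * r2) := by nlinarith
  rw [← mul_div_assoc, ← mul_div_assoc,
    div_add_div _ _ (ne_of_gt d1) (ne_of_gt d2), div_le_div_iff₀ (mul_pos d1 d2) ds]
  nlinarith [mul_nonneg (mul_nonneg (mul_pos hμ hc).le (mul_nonneg hθ (by linarith : (0:ℝ) ≤ 1 - θ))) (sq_nonneg (r1 - r2))]

lemma sqrt_combo {x y θ : ℝ} (hx : 0 ≤ x) (hy : 0 ≤ y) (hθ : 0 ≤ θ) (hθ1 : θ ≤ 1) :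
    θ * Real.sqrt x + (1 - θ) * Real.sqrt y ≤ Real.sqrt (θ * x + (1 - θ) * y) := by
  have h1 : 0 ≤ θ * Real.sqrt x + (1 - θ) * Real.sqrt y :=
    add_nonneg (mul_nonneg hθ (sqrt_nonneg x)) (mul_nonneg (by linarith) (sqrt_nonneg y))
  have h2 : (θ * Real.sqrt x + (1 - θ) * Real.sqrt y) ^ 2 ≤ θ * x + (1 - θ) * y := by
    nlinarith [sq_sqrt hx, sq_sqrt hy, sqrt_nonneg x, sqrt_nonneg y,
      mul_nonneg (mul_nonneg hθ (by linarith : (0:ℝ) ≤ 1 - θ)) (sq_nonneg (Real.sqrt x - Real.sqrt y))]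
  calc θ * Real.sqrt x + (1 - θ) * Real.sqrt y
      = Real.sqrt ((θ * Real.sqrt x + (1 - θ) * Real.sqrt y) ^ 2) := (Real.sqrt_sq h1).symm
    _ ≤ Real.sqrt (θ * x + (1 - θ) * y) := Real.sqrt_le_sqrt h2

/-- concavity of `F a = a + 1 + μ √a/(c+√a)` -/
lemma concF {μ c x y θ : ℝ} (hμ : 0 < μ) (hc : 0 < c) (hx : 0 ≤ x) (hy : 0 ≤ y)
    (hθ : 0 ≤ θ) (hθ1 : θ ≤ 1) :
    θ * (x + 1 + μ * Real.sqrt x / (c + Real.sqrt x))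
      + (1 - θ) * (y + 1 + μ * Real.sqrt y / (c + Real.sqrt y))
    ≤ (θ * x + (1 - θ) * y) + 1
      + μ * Real.sqrt (θ * x + (1 - θ) * y) / (c + Real.sqrt (θ * x + (1 - θ) * y)) := by
  have key : θ * (μ * Real.sqrt x / (c + Real.sqrt x))
      + (1 - θ) * (μ * Real.sqrt y / (c + Real.sqrt y))
      ≤ μ * Real.sqrt (θ * x + (1 - θ) * y) / (c + Real.sqrt (θ * x + (1 - θ) * y)) := by
    refine le_trans (hconc hμ hc (sqrt_nonneg x) (sqrt_nonneg y) hθ hθ1) ?_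
    exact hmono hμ hc
      (add_nonneg (mul_nonneg hθ (sqrt_nonneg x)) (mul_nonneg (by linarith) (sqrt_nonneg y)))
      (sqrt_combo hx hy hθ hθ1)
  nlinarith [key]

lemma chord {H : ℝ → ℝ}
    (hcvx : ∀ x y θ : ℝ, 0 ≤ θ → θ ≤ 1 → H (θ*x+(1-θ)*y) ≤ θ*H x + (1-θ)*H y)
    {x q₀ y : ℝ} (hx : x < q₀) (hy : q₀ < y) :
    (H q₀ - H x) * (y - q₀) ≤ (H y - H q₀) * (q₀ - x) := by
  have hyx : (0:ℝ) < y - x := by linarith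
  set θ : ℝ := (y - q₀)/(y - x) with hθdef
  have hθ0 : 0 ≤ θ := div_nonneg (by linarith) hyx.le
  have hθ1 : θ ≤ 1 := by rw [hθdef, div_le_one hyx]; linarith
  have hmid : θ*x+(1-θ)*y = q₀ := by rw [hθdef]; field_simp; ring
  have hq := hcvx x y θ hθ0 hθ1
  rw [hmid] at hq
  have e1 : θ*(y-x) = y - q₀ := by rw [hθdef]; field_simp
  have e2 : (1-θ)*(y-x) = q₀ - x := by rw [hθdef]; field_simp; ring
  have key := mul_le_mul_of_nonneg_right hq hyx.le
  have e3 : (θ*H x + (1-θ)*H y)*(y-x) = (y-q₀)*H x + (q₀-x)*H y := by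
    linear_combination H x * e1 + H y * e2
  rw [e3] at key
  nlinarith [key]

lemma exists_support {H : ℝ → ℝ}
    (hcvx : ∀ x y θ : ℝ, 0 ≤ θ → θ ≤ 1 → H (θ*x+(1-θ)*y) ≤ θ*H x + (1-θ)*H y)
    (q₀ : ℝ) : ∃ b : ℝ, ∀ q, H q₀ + b*(q - q₀) ≤ H q := by
  set S : Set ℝ := (fun y => (H y - H q₀)/(y - q₀)) '' Ioi q₀ with hS
  have hne : S.Nonempty := ⟨_, ⟨q₀ + 1, by simp, rfl⟩⟩
  have hbdd : BddBelow S := by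
    refine ⟨H q₀ - H (q₀ - 1), ?_⟩
    rintro s ⟨y, hy, rfl⟩
    rw [mem_Ioi] at hy
    have h := chord hcvx (by linarith : q₀ - 1 < q₀) hy
    rw [le_div_iff₀ (by linarith : (0:ℝ) < y - q₀)]
    nlinarith [h]
  set b := sInf S with hb
  refine ⟨b, fun q => ?_⟩
  rcases lt_trichotomy q q₀ with h | h | h
  · have hlb : (H q₀ - H q)/(q₀ - q) ≤ b := by
      apply le_csInf hne
      rintro s ⟨y, hy, rfl⟩
      rw [mem_Ioi] at hy
      have hc := chord hcvx h hy
      rw [div_le_div_iff₀ (by linarith : (0:ℝ) < q₀ - q) (by linarith : (0:ℝ) < y - q₀)]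
      nlinarith [hc]
    rw [div_le_iff₀ (by linarith : (0:ℝ) < q₀ - q)] at hlb
    nlinarith [hlb]
  · subst h; simp
  · have hub : b ≤ (H q - H q₀)/(q - q₀) := csInf_le hbdd ⟨q, h, rfl⟩
    rw [le_div_iff₀ (by linarith : (0:ℝ) < q - q₀)] at hub
    nlinarith [hub]

section Aux
variable {D μ ν κ : ℝ} (hD : 1 < D) (hμ : 0 < μ) (hν : 0 < ν) (hκ : 0 < κ)
variable {pq : ℝ → ℝ} (hpq : IsCriticalSlope D μ ν κ pq)


include hpq in
lemma pq_nonneg (q : ℝ) : 0 ≤ pq q := by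
  rcases le_or_gt ((D - 1) * q ^ 2) 1 with h | h
  · rw [(hpq q).1 h]
  · exact ((hpq q).2 h).1.le

include hμ hν hκ in
lemma Gmono {a b : ℝ} (ha : 0 ≤ a) (hab : a < b) :
    a ^ 2 + 1 + μ * a / (κ * ν + a) < b ^ 2 + 1 + μ * b / (κ * ν + b) := by
  have hc : 0 < κ * ν := mul_pos hκ hν
  have h1 : μ * a / (κ * ν + a) ≤ μ * b / (κ * ν + b) := by
    rw [div_le_div_iff₀ (by linarith) (by linarith)]
    nlinarith [mul_pos hμ hc, mul_lt_mul_of_pos_left hab (mul_pos hμ hc)]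
  nlinarith

include hμ hν hκ hpq in
lemma pq_eq_of {q p : ℝ} (hp : 0 < p)
    (heq : (D - 1) * q ^ 2 = p ^ 2 + 1 + μ * p / (κ * ν + p)) : pq q = p := by
  have hc : 0 < κ * ν := mul_pos hκ hν
  have h1 : 1 < (D - 1) * q ^ 2 := by
    rw [heq]
    have : 0 < μ * p / (κ * ν + p) := by positivity
    nlinarith
  obtain ⟨hpos, heq2⟩ := (hpq q).2 h1
  by_contra hne
  rcases lt_or_gt_of_ne hne with h | h
  · have := Gmono hμ hν hκ (le_of_lt hpos) h
    rw [← heq2, ← heq] at this; linarith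
  · have := Gmono hμ hν hκ hp.le h
    rw [← heq2, ← heq] at this; linarith

include hμ hν hκ hpq in
lemma pq_even (q : ℝ) : pq (-q) = pq q := by
  rcases le_or_gt ((D - 1) * q ^ 2) 1 with h | h
  · rw [(hpq q).1 h, (hpq (-q)).1 (by rwa [neg_sq])]
  · obtain ⟨hpos, heq⟩ := (hpq q).2 h
    exact pq_eq_of hμ hν hκ hpq hpos (by rw [neg_sq]; exact heq)

include hμ hν hκ hpq in
lemma Hr_even (q : ℝ) : Hr pq (-q) = Hr pq q := by
  unfold Hr; rw [pq_even hμ hν hκ hpq, neg_sq]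

include hpq in
lemma sub_Hr_le (v q : ℝ) : v * q - Hr pq q ≤ v ^ 2 / 4 - 1 := by
  have h := pq_nonneg hpq q
  unfold Hr
  nlinarith [sq_nonneg (v / 2 - q), sq_nonneg (pq q)]

include hpq in
lemma bddAbove_sub_Hr (v : ℝ) : BddAbove (Set.range fun q => v * q - Hr pq q) := by
  exact ⟨v ^ 2 / 4 - 1, by rintro x ⟨q, rfl⟩; exact sub_Hr_le hpq v q⟩

include hpq in
lemma le_Lr (v q : ℝ) : v * q - Hr pq q ≤ Lr pq v :=
  le_ciSup (bddAbove_sub_Hr hpq v) q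

lemma Lr_le {v c : ℝ} (h : ∀ q, v * q - Hr pq q ≤ c) : Lr pq v ≤ c :=
  ciSup_le h

include hpq in
lemma claim1 (q : ℝ) :
    (D - 1) * q ^ 2 ≤ pq q ^ 2 + 1 + μ * pq q / (κ * ν + pq q) := by
  rcases le_or_gt ((D - 1) * q ^ 2) 1 with h | h
  · have h0 := (hpq q).1 h
    rw [h0]; simp; linarith
  · exact le_of_eq ((hpq q).2 h).2

include hμ hν hκ hpq in
lemma comparison {q w : ℝ} (hw : 0 ≤ w)
    (h : (D - 1) * q ^ 2 ≤ w + 1 + μ * Real.sqrt w / (κ * ν + Real.sqrt w)) :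
    pq q ^ 2 ≤ w := by
  rcases le_or_gt ((D - 1) * q ^ 2) 1 with h1 | h1
  · rw [(hpq q).1 h1]; simpa using hw
  · obtain ⟨hpos, heq⟩ := (hpq q).2 h1
    by_contra hcon
    push_neg at hcon
    have hsq : Real.sqrt w < pq q := by
      have := Real.sqrt_lt_sqrt hw hcon
      rwa [Real.sqrt_sq hpos.le] at this
    have hG := Gmono hμ hν hκ (Real.sqrt_nonneg w) hsq
    rw [Real.sq_sqrt hw] at hG
    linarith [heq ▸ h, hG, h, heq.le]

include hD hμ hν hκ hpq in
lemma Hr_cvx (x y θ : ℝ) (hθ : 0 ≤ θ) (hθ1 : θ ≤ 1) :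
    Hr pq (θ*x+(1-θ)*y) ≤ θ * Hr pq x + (1-θ) * Hr pq y := by
  have hc : (0:ℝ) < κ * ν := mul_pos hκ hν
  have hD1 : (0:ℝ) < D - 1 := by linarith
  have h1θ : (0:ℝ) ≤ 1 - θ := by linarith
  set z := θ*x+(1-θ)*y with hz
  set w := θ * pq x ^ 2 + (1-θ) * pq y ^ 2 with hwdef
  have hw : 0 ≤ w := add_nonneg (mul_nonneg hθ (sq_nonneg _)) (mul_nonneg h1θ (sq_nonneg _))
  have hz2 : z ^ 2 ≤ θ*x^2+(1-θ)*y^2 := by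
    rw [hz]
    nlinarith [mul_nonneg (mul_nonneg hθ h1θ) (sq_nonneg (x - y))]
  have ex : Real.sqrt (pq x ^ 2) = pq x := Real.sqrt_sq (pq_nonneg hpq x)
  have ey : Real.sqrt (pq y ^ 2) = pq y := Real.sqrt_sq (pq_nonneg hpq y)
  have hF := concF hμ hc (sq_nonneg (pq x)) (sq_nonneg (pq y)) hθ hθ1
  rw [ex, ey, ← hwdef] at hF
  have c1 := mul_le_mul_of_nonneg_left (claim1 hpq x) hθ
  have c2 := mul_le_mul_of_nonneg_left (claim1 hpq y) h1θ
  have hcomp : pq z ^ 2 ≤ w := by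
    apply comparison hμ hν hκ hpq hw
    have : (D-1) * z^2 ≤ θ*((D-1)*x^2) + (1-θ)*((D-1)*y^2) := by nlinarith [hz2]
    exact le_trans this (le_trans (add_le_add c1 c2) hF)
  show z^2 + pq z ^2 + 1 ≤ θ * (x^2 + pq x ^2 + 1) + (1-θ) * (y^2 + pq y ^2 + 1)
  nlinarith [hz2, hcomp]

include hD hμ hν hκ hpq in
lemma support_v₀ {v₀ q₀ : ℝ} (hsub : ∀ v : ℝ, Lr pq v₀ + q₀ * (v - v₀) ≤ Lr pq v) :
    ∀ q, Hr pq q₀ + v₀ * (q - q₀) ≤ Hr pq q := by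
  obtain ⟨b, hbsup⟩ := exists_support (H := Hr pq) (Hr_cvx hD hμ hν hκ hpq) q₀
  have hLb : Lr pq b ≤ b * q₀ - Hr pq q₀ := by
    apply Lr_le
    intro q
    have := hbsup q
    nlinarith [hbsup q]
  have hL0 : Lr pq v₀ ≤ v₀ * q₀ - Hr pq q₀ := by
    have h := hsub b
    nlinarith [hsub b, hLb]
  intro q
  have h2 := le_Lr hpq v₀ q
  nlinarith [le_Lr hpq v₀ q, hL0]

set_option maxHeartbeats 1000000 in
include hD hμ hν hκ hpq in
lemma posB {v₀ q₀ : ℝ} (hq₀ : 0 < q₀) (hp₀pos : 0 < pq q₀)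
    (hv : ∀ q, Hr pq q₀ + v₀ * (q - q₀) ≤ Hr pq q)
    (hcle : v₀ * q₀ ≤ Hr pq q₀) : Hr pq q₀ < 2 := by
  have hc0 : (0:ℝ) < κ * ν := mul_pos hκ hν
  have hD1 : (0:ℝ) < D - 1 := by linarith
  obtain ⟨p₀, hp₀def⟩ : ∃ p, p = pq q₀ := ⟨_, rfl⟩
  have hp₀ : 0 < p₀ := hp₀def ▸ hp₀pos
  obtain ⟨m₀, hm₀def⟩ : ∃ m, m = μ * p₀ / (κ * ν + p₀) := ⟨_, rfl⟩
  obtain ⟨B, hBdef⟩ : ∃ b, b = μ * (κ * ν) / (κ * ν + p₀) ^ 2 := ⟨_, rfl⟩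
  obtain ⟨E, hEdef⟩ : ∃ e, e = p₀ ^ 2 + 1 + m₀ := ⟨_, rfl⟩
  have hcp : (0:ℝ) < κ * ν + p₀ := by linarith
  have hm₀pos : 0 < m₀ := by rw [hm₀def]; positivity
  have hBpos : 0 < B := by rw [hBdef]; positivity
  have h1 : 1 < (D - 1) * q₀ ^ 2 := by
    by_contra hcon
    push_neg at hcon
    have := (hpq q₀).1 hcon
    rw [← hp₀def] at this
    linarith
  have heq : (D - 1) * q₀ ^ 2 = E := by
    rw [hEdef, hm₀def, hp₀def]
    exact ((hpq q₀).2 h1).2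
  have hEpos : 0 < E := by rw [hEdef]; positivity
  have hq0sq : q₀ ^ 2 = E / (D - 1) := by
    rw [eq_div_iff (ne_of_gt hD1)]; linarith [heq]
  have hq₀eq : q₀ = Real.sqrt (E / (D - 1)) := by
    rw [← hq0sq, Real.sqrt_sq hq₀.le]
  -- the test family
  obtain ⟨g, hgdef⟩ : ∃ g : ℝ → ℝ, g = fun t => μ * (κ * ν) / ((κ * ν + p₀) * (κ * ν + (p₀ - t))) :=
    ⟨_, rfl⟩
  obtain ⟨st, hstdef⟩ : ∃ s : ℝ → ℝ,
      s = fun t => (p₀ - t) ^ 2 + 1 + μ * (p₀ - t) / (κ * ν + (p₀ - t)) := ⟨_, rfl⟩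
  obtain ⟨qt, hqtdef⟩ : ∃ f : ℝ → ℝ, f = fun t => Real.sqrt (st t / (D - 1)) := ⟨_, rfl⟩
  obtain ⟨Efun, hEfdef⟩ : ∃ f : ℝ → ℝ,
      f = fun t => (q₀ + qt t) * (D * (2 * p₀ - t) + g t) / ((2 * p₀ - t) + g t) := ⟨_, rfl⟩
  have hptw : ∀ t ∈ Ioo (0:ℝ) p₀, Efun t ≤ v₀ := by
    rintro t ⟨ht0, htp⟩
    have hptpos : 0 < p₀ - t := by linarith
    have hcpt : (0:ℝ) < κ * ν + (p₀ - t) := by linarith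
    have hst1 : 1 < st t := by
      have hx : 0 < μ * (p₀ - t) / (κ * ν + (p₀ - t)) := by positivity
      rw [hstdef]; nlinarith [sq_nonneg (p₀ - t)]
    have hstE : st t < E := by
      have hG := Gmono hμ hν hκ hptpos.le (by linarith : p₀ - t < p₀)
      rw [hstdef, hEdef, hm₀def]
      exact hG
    have hstpos : (0:ℝ) < st t := by linarith
    have hqtsq : qt t ^ 2 = st t / (D - 1) := by
      rw [hqtdef, Real.sq_sqrt (by positivity)]
    have hqtpos : 0 < qt t := by
      rw [hqtdef]; exact Real.sqrt_pos.2 (by positivity)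
    have hqtlt : qt t < q₀ := by
      rw [hqtdef, hq₀eq]
      exact Real.sqrt_lt_sqrt (by positivity) (div_lt_div_of_pos_right hstE hD1)
    have hpqt : pq (qt t) = p₀ - t := by
      apply pq_eq_of hμ hν hκ hpq hptpos
      rw [hqtsq, hstdef]
      field_simp
    have hgpos : 0 < g t := by
      rw [hgdef]; exact div_pos (mul_pos hμ hc0) (mul_pos hcp hcpt)
    have hden : 0 < (2 * p₀ - t) + g t := by linarith
    have hΔ : m₀ - μ * (p₀ - t) / (κ * ν + (p₀ - t)) = t * g t := by
      rw [hm₀def, hgdef]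
      rw [div_sub_div _ _ hcp.ne' hcpt.ne', ← mul_div_assoc]
      congr 1
      ring
    have hEs : E - st t = t * (2 * p₀ - t) + t * g t := by
      rw [hEdef, hstdef]
      linarith [hΔ]
    have hq2m : q₀ ^ 2 - qt t ^ 2 = (t * (2 * p₀ - t) + t * g t) / (D - 1) := by
      rw [hq0sq, hqtsq, ← sub_div, hEs]
    have hhv := hv (qt t)
    unfold Hr at hhv
    rw [hpqt, ← hp₀def] at hhv
    have h5 : (q₀ ^ 2 - qt t ^ 2) + t * (2 * p₀ - t) ≤ v₀ * (q₀ - qt t) := by linarith [hhv]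
    have h6 := mul_le_mul_of_nonneg_right h5 (by linarith : (0:ℝ) ≤ q₀ + qt t)
    have h7 : v₀ * (q₀ - qt t) * (q₀ + qt t) = v₀ * (q₀ ^ 2 - qt t ^ 2) := by ring
    rw [h7, hq2m] at h6
    rw [hEfdef]
    rw [div_le_iff₀ hden]
    have h8 := mul_le_mul_of_nonneg_right h6 hD1.le
    have h9 : v₀ * ((t * (2 * p₀ - t) + t * g t) / (D - 1)) * (D - 1)
        = t * (v₀ * ((2 * p₀ - t) + g t)) := by
      field_simp
    have h10 : ((t * (2 * p₀ - t) + t * g t) / (D - 1) + t * (2 * p₀ - t)) * (q₀ + qt t) * (D - 1)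
        = t * ((q₀ + qt t) * (D * (2 * p₀ - t) + g t)) := by
      field_simp
      ring
    rw [h9, h10] at h8
    exact le_of_mul_le_mul_left h8 ht0
  -- continuity and the limit
  have hg0 : g 0 = B := by rw [hgdef, hBdef]; simp only [sub_zero]; ring_nf
  have hst0 : st 0 = E := by rw [hstdef, hEdef, hm₀def]; simp only [sub_zero]
  have hqt0 : qt 0 = q₀ := by rw [hqtdef]; simp only [hst0]; rw [← hq₀eq]
  have hcp' : (κ * ν + p₀) * (κ * ν + (p₀ - 0)) ≠ 0 := by
    simp only [sub_zero]; positivity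
  have hcg : ContinuousAt g 0 := by
    rw [hgdef]
    exact ContinuousAt.div continuousAt_const (by fun_prop) hcp'
  have hcst : ContinuousAt st 0 := by
    rw [hstdef]
    apply ContinuousAt.add (by fun_prop)
    exact ContinuousAt.div (by fun_prop) (by fun_prop) (by simp only [sub_zero]; positivity)
  have hcqt : ContinuousAt qt 0 := by
    rw [hqtdef]
    exact Real.continuous_sqrt.continuousAt.comp (hcst.div_const _)
  have hdenne : (2 * p₀ - (0:ℝ)) + g 0 ≠ 0 := by
    rw [sub_zero, hg0]; exact ne_of_gt (by linarith)
  have hcE : ContinuousAt Efun 0 := by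
    rw [hEfdef]
    apply ContinuousAt.div
    · exact (continuousAt_const.add hcqt).mul
        ((by fun_prop : ContinuousAt (fun t : ℝ => D * (2 * p₀ - t)) 0).add hcg)
    · exact ContinuousAt.add (by fun_prop : ContinuousAt (fun t : ℝ => 2 * p₀ - t) 0) hcg
    · exact hdenne
  have hE0 : Efun 0 = 2 * q₀ * (2 * D * p₀ + B) / (2 * p₀ + B) := by
    rw [hEfdef]; simp only [sub_zero, hqt0, hg0]; ring_nf
  have hVle : 2 * q₀ * (2 * D * p₀ + B) / (2 * p₀ + B) ≤ v₀ := by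
    rw [← hE0]
    have hT : Tendsto Efun (𝓝[>] (0:ℝ)) (𝓝 (Efun 0)) :=
      hcE.tendsto.mono_left nhdsWithin_le_nhds
    apply le_of_tendsto hT
    filter_upwards [Ioo_mem_nhdsGT_of_mem (Set.mem_Ico.mpr ⟨le_refl 0, hp₀⟩)] with t ht
    exact hptw t ht
  -- final algebra
  have hdenB : (0:ℝ) < 2 * p₀ + B := by linarith
  have hstep : 2 * E * (2 * D * p₀ + B) ≤ (E + (D - 1) * (p₀ ^ 2 + 1)) * (2 * p₀ + B) := by
    have h0 : 2 * q₀ * (2 * D * p₀ + B) / (2 * p₀ + B) * q₀ ≤ v₀ * q₀ :=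
      mul_le_mul_of_nonneg_right hVle hq₀.le
    have h1' : v₀ * q₀ ≤ q₀ ^ 2 + p₀ ^ 2 + 1 := by
      unfold Hr at hcle; rw [← hp₀def] at hcle; linarith
    have h2 : 2 * q₀ ^ 2 * (2 * D * p₀ + B) ≤ (q₀ ^ 2 + p₀ ^ 2 + 1) * (2 * p₀ + B) := by
      rw [div_mul_eq_mul_div, div_le_iff₀ hdenB] at h0
      nlinarith [h0, mul_le_mul_of_nonneg_right h1' hdenB.le]
    have h3 := mul_le_mul_of_nonneg_right h2 hD1.le
    have e1 : 2 * q₀ ^ 2 * (2 * D * p₀ + B) * (D - 1) = 2 * ((D-1)*q₀^2) * (2 * D * p₀ + B) := by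
      ring
    have e2 : (q₀ ^ 2 + p₀ ^ 2 + 1) * (2 * p₀ + B) * (D - 1)
        = ((D-1)*q₀^2 + (D - 1) * (p₀ ^ 2 + 1)) * (2 * p₀ + B) := by ring
    rw [e1, e2, heq] at h3
    exact h3
  have hK : (D - 1) * m₀ * (2 * p₀ + B) ≤ E * ((D - 2) * B - 2 * D * p₀) := by
    have hm : p₀ ^ 2 + 1 = E - m₀ := by rw [hEdef]; ring
    rw [hm] at hstep
    linarith [hstep]
  have hpB : p₀ * B ≤ m₀ := by
    rw [hBdef, hm₀def, ← mul_div_assoc, div_le_div_iff₀ (by positivity) hcp]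
    nlinarith [mul_pos (mul_pos hμ hp₀) hc0, sq_nonneg (κ * ν + p₀), mul_pos hc0 hp₀,
      mul_pos hcp hcp]
  have hm₀E : m₀ < E := by rw [hEdef]; nlinarith [sq_nonneg p₀]
  have hstep2 : (2*D - 2) * p₀ ^ 2 * B < 2 * D * p₀ * E := by
    have hx : (D - 1) * (p₀ * B) < D * E := by
      linarith [mul_le_mul_of_nonneg_left hpB (by linarith : (0:ℝ) ≤ D - 1),
        mul_lt_mul_of_pos_left hm₀E (by linarith : (0:ℝ) < D), hm₀pos]
    linarith [mul_lt_mul_of_pos_left hx (by linarith : (0:ℝ) < 2 * p₀)]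
  have hstep3 : (D - 1) * m₀ + (2*D - 2) * p₀ ^ 2 < (D - 2) * E := by
    have h4 : (D - 1) * m₀ * B ≤ E * ((D - 2) * B - 2 * D * p₀) := by
      nlinarith [hK, mul_nonneg (mul_nonneg (by linarith : (0:ℝ) ≤ D - 1) hm₀pos.le)
        (by linarith : (0:ℝ) ≤ 2 * p₀)]
    have h5 : ((D - 1) * m₀ + (2*D - 2) * p₀ ^ 2) * B < ((D - 2) * E) * B := by
      linarith [h4, hstep2]
    exact lt_of_mul_lt_mul_right h5 hBpos.le
  have hfin : D * p₀ ^ 2 + m₀ < D - 2 := by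
    have := hEdef
    nlinarith [hstep3]
  have hHr : (D - 1) * Hr pq q₀ = D * p₀ ^ 2 + m₀ + D := by
    unfold Hr; rw [← hp₀def]
    linarith [heq, hEdef]
  have hlast : (D - 1) * Hr pq q₀ < (D - 1) * 2 := by linarith [hHr, hfin]
  exact (mul_lt_mul_iff_right₀ hD1).mp hlast

include hD hμ hν hκ hpq in
lemma posZ {v₀ q₀ : ℝ} (hq₀ : 0 < q₀) (hq1 : 1 ≤ q₀ ^ 2) (hflat : (D - 1) * q₀ ^ 2 ≤ 1)
    (hv : ∀ q, Hr pq q₀ + v₀ * (q - q₀) ≤ Hr pq q) : Hr pq q₀ ≤ v₀ * q₀ := by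
  have hD1 : (0:ℝ) < D - 1 := by linarith
  have hp0 : pq q₀ = 0 := (hpq q₀).1 hflat
  have key : ∀ t, 0 ≤ t → t < q₀ → q₀ + t ≤ v₀ := by
    intro t ht htq
    have ht2 : t ^ 2 ≤ q₀ ^ 2 := by nlinarith
    have hflatt : (D - 1) * t ^ 2 ≤ 1 := by nlinarith
    have hpt : pq t = 0 := (hpq t).1 hflatt
    have h1 := hv t
    unfold Hr at h1
    rw [hp0, hpt] at h1
    have h2 : (q₀ + t) * (q₀ - t) ≤ v₀ * (q₀ - t) := by linarith [h1]
    exact le_of_mul_le_mul_right h2 (by linarith)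
  have h2q : 2 * q₀ ≤ v₀ := by
    by_contra hcon
    push_neg at hcon
    have h0 := key 0 le_rfl hq₀
    have hk := key (v₀ / 2) (by linarith) (by linarith)
    linarith
  unfold Hr
  rw [hp0]
  nlinarith [mul_le_mul_of_nonneg_right h2q hq₀.le, hq1]

include hD hμ hν hκ hpq in
lemma core_nonneg {v₀ q₀ : ℝ} (hq₀ : 0 ≤ q₀)
    (hv : ∀ q, Hr pq q₀ + v₀ * (q - q₀) ≤ Hr pq q)
    (hcle : v₀ * q₀ ≤ Hr pq q₀)
    (hside : v₀ * q₀ < Hr pq q₀ ∨ 2 < D) : Hr pq q₀ < 2 := by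
  have hD1 : (0:ℝ) < D - 1 := by linarith
  rcases le_or_gt ((D - 1) * q₀ ^ 2) 1 with hflat | hbig
  · have hp0 : pq q₀ = 0 := (hpq q₀).1 hflat
    rcases hside with hstrict | hD2
    · by_contra hcon
      push_neg at hcon
      have hq1 : 1 ≤ q₀ ^ 2 := by
        unfold Hr at hcon; rw [hp0] at hcon; nlinarith [hcon]
      have hq₀pos : 0 < q₀ := by
        rcases eq_or_lt_of_le hq₀ with h | h
        · exfalso; rw [← h] at hq1; norm_num at hq1
        · exact h
      have := posZ hD hμ hν hκ hpq hq₀pos hq1 hflat hv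
      linarith
    · have hq2 : q₀ ^ 2 < 1 := by nlinarith
      unfold Hr; rw [hp0]; nlinarith
  · have hpos := ((hpq q₀).2 hbig).1
    have hq₀pos : 0 < q₀ := by
      rcases eq_or_lt_of_le hq₀ with h | h
      · exfalso; rw [← h] at hbig; norm_num at hbig
      · exact h
    exact posB hD hμ hν hκ hpq hq₀pos hpos hv hcle

include hD hμ hν hκ hpq in
lemma core_all {v₀ q₀ : ℝ}
    (hv : ∀ q, Hr pq q₀ + v₀ * (q - q₀) ≤ Hr pq q)
    (hcle : v₀ * q₀ ≤ Hr pq q₀)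
    (hside : v₀ * q₀ < Hr pq q₀ ∨ 2 < D) : Hr pq q₀ < 2 := by
  rcases le_or_gt 0 q₀ with h | h
  · exact core_nonneg hD hμ hν hκ hpq h hv hcle hside
  · have hHe : Hr pq (-q₀) = Hr pq q₀ := Hr_even hμ hν hκ hpq q₀
    have hv' : ∀ q, Hr pq (-q₀) + (-v₀) * (q - (-q₀)) ≤ Hr pq q := by
      intro q
      have h1 := hv (-q)
      rw [Hr_even hμ hν hκ hpq q] at h1
      rw [hHe]
      nlinarith [h1]
    have hcle' : (-v₀) * (-q₀) ≤ Hr pq (-q₀) := by rw [hHe]; nlinarith [hcle]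
    have hside' : (-v₀) * (-q₀) < Hr pq (-q₀) ∨ 2 < D := by
      rcases hside with hs | hs
      · left; rw [hHe]; nlinarith [hs]
      · right; exact hs
    have := core_nonneg hD hμ hν hκ hpq (by linarith : (0:ℝ) ≤ -q₀) hv' hcle' hside'
    rwa [hHe] at this

end Aux

/-- If `q₀` is in the subdifferential of `L_r` at `v₀`, then `L_r(v₀) < 0`
implies `H_r(q₀) < 2`; and if moreover `D > 2`, `L_r(v₀) ≤ 0` already implies
`H_r(q₀) < 2`. -/
theorem Hr_lt_two_of_subdifferential
    (D μ ν κ : ℝ) (hD : 1 < D) (hμ : 0 < μ) (hν : 0 < ν) (hκ : 0 < κ)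
    (pq : ℝ → ℝ) (hpq : IsCriticalSlope D μ ν κ pq)
    (v₀ q₀ : ℝ) (hsub : ∀ v : ℝ, Lr pq v₀ + q₀ * (v - v₀) ≤ Lr pq v) :
    (Lr pq v₀ < 0 → Hr pq q₀ < 2) ∧
      (2 < D → Lr pq v₀ ≤ 0 → Hr pq q₀ < 2) := by
  have hv := support_v₀ hD hμ hν hκ hpq hsub
  have hle := le_Lr hpq v₀ q₀
  constructor
  · intro hL
    exact core_all hD hμ hν hκ hpq hv (by linarith) (Or.inl (by linarith))
  · intro hD2 hL
    exact core_all hD hμ hν hκ hpq hv (by linarith) (Or.inr hD2)
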